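/- Let A ∈ ℝ^{m×d} and b ∈ ℝ^m define the bounded polytope P = {x ∈ ℝ^d : Ax ≤ b}, and assume that every set of d−1 rows of A is linearly independent. Let p ∈ ℝ^d, b' ∈ ℝ, c ∈ ℝ^d, and let N = {x : p·x ≤ b'}. Suppose x⁰ is the unique maximizer of c·x over P ∩ N, and suppose exactly d of the m+1 inequality constraints (the m rows A_j·x ≤ b_j together with p·x ≤ b') hold with equality at x⁰. Then x⁰ lies on an edge of P: there exists a set J of d−1 indices in {1,…,m} such that the rows {A_j : j ∈ J} are linearly independent and A_j·x⁰ = b_j for every j ∈ J. -/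

import Mathlib

open Matrix

/-- Lemma 3.2: under the non-degeneracy assumptions, the unique optimal solution
of the day's LP (over `P ∩ N` where `P = {x | Ax ≤ b}` and `N = {x | p·x ≤ b'}`)
which binds exactly `d` of the `m + 1` constraints lies on an edge of `P`. -/
theorem stmt_2 {d m : ℕ} (A : Matrix (Fin m) (Fin d) ℝ) (b : Fin m → ℝ)
    (hBdd : Bornology.IsBounded {x : Fin d → ℝ | ∀ j, A j ⬝ᵥ x ≤ b j})
    (hrows : ∀ J : Finset (Fin m), J.card = d - 1 →
      LinearIndependent ℝ (fun j : J => A (j : Fin m)))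
    (p : Fin d → ℝ) (b' : ℝ) (c : Fin d → ℝ) (x0 : Fin d → ℝ)
    (hx0P : ∀ j, A j ⬝ᵥ x0 ≤ b j) (hx0N : p ⬝ᵥ x0 ≤ b')
    (hopt : ∀ y, (∀ j, A j ⬝ᵥ y ≤ b j) → p ⬝ᵥ y ≤ b' → c ⬝ᵥ y ≤ c ⬝ᵥ x0)
    (huniq : ∀ y, (∀ j, A j ⬝ᵥ y ≤ b j) → p ⬝ᵥ y ≤ b' → c ⬝ᵥ y = c ⬝ᵥ x0 → y = x0)
    (hbind : {i : Fin m ⊕ Unit |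
      Sum.elim (fun j => A j ⬝ᵥ x0 = b j) (fun _ => p ⬝ᵥ x0 = b') i}.ncard = d) :
    ∃ J : Finset (Fin m), J.card = d - 1 ∧
      LinearIndependent ℝ (fun j : J => A (j : Fin m)) ∧
      ∀ j ∈ J, A j ⬝ᵥ x0 = b j := by
  classical
  set S : Finset (Fin m) := Finset.univ.filter (fun j => A j ⬝ᵥ x0 = b j) with hS
  have hsub : {i : Fin m ⊕ Unit |
      Sum.elim (fun j => A j ⬝ᵥ x0 = b j) (fun _ => p ⬝ᵥ x0 = b') i} ⊆
      (Sum.inl '' (S : Set (Fin m))) ∪ {Sum.inr ()} := by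
    rintro (j | u) hi
    · left
      exact ⟨j, by simpa [hS] using hi, rfl⟩
    · right
      simp
  have hcard : d ≤ S.card + 1 := by
    calc d = {i : Fin m ⊕ Unit |
        Sum.elim (fun j => A j ⬝ᵥ x0 = b j) (fun _ => p ⬝ᵥ x0 = b') i}.ncard := hbind.symm
      _ ≤ ((Sum.inl '' (S : Set (Fin m))) ∪ {Sum.inr ()}).ncard :=
          Set.ncard_le_ncard hsub (Set.toFinite _)
      _ ≤ (Sum.inl '' (S : Set (Fin m))).ncard + ({Sum.inr ()} : Set (Fin m ⊕ Unit)).ncard :=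
          Set.ncard_union_le _ _
      _ = S.card + 1 := by
          rw [Set.ncard_image_of_injective _ Sum.inl_injective, Set.ncard_coe_finset,
            Set.ncard_singleton]
  have hge : d - 1 ≤ S.card := by omega
  obtain ⟨J, hJS, hJcard⟩ := Finset.exists_subset_card_eq hge
  refine ⟨J, hJcard, hrows J hJcard, fun j hj => ?_⟩
  have := hJS hj
  simpa [hS] using this
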